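/- Assume additionally that p_2, …, p_n are odd. Let y ∈ ℤ be such that at most n − 3 of the integers p_1, …, p_n divide y. Then there exists l = (l_1, …, l_n) ∈ L(p_1, …, p_n) such that y² ≡ (l_1 · P/p_1 + Σ_{j=2}^n 2 l_j · P/p_j)² (mod 4P). -/

import Mathlib

open scoped BigOperators

lemma key_choice (a b m : ℤ) (hm : 0 < m) (h : IsCoprime a m) :
    ∃ x ε : ℤ, 0 ≤ x ∧ 2 * x ≤ m ∧ (ε = 1 ∨ ε = -1) ∧ m ∣ x * a - ε * b := by
  obtain ⟨u, v, huv⟩ := h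
  set r := (u * b) % m with hr
  have hr0 : 0 ≤ r := Int.emod_nonneg _ hm.ne'
  have hrm : r < m := Int.emod_lt_of_pos _ hm
  have hd1 : m ∣ r - u * b := by
    have := Int.emod_add_mul_ediv (u * b) m
    refine ⟨-((u * b) / m), by linarith [this]⟩
  have hua : m ∣ u * a - 1 := ⟨-v, by linarith⟩
  rcases le_or_gt (2 * r) m with hle | hgt
  · refine ⟨r, 1, hr0, hle, Or.inl rfl, ?_⟩
    have : r * a - 1 * b = (r - u * b) * a + (u * a - 1) * b := by ring
    rw [this]
    exact dvd_add (hd1.mul_right _) (hua.mul_right _)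
  · refine ⟨m - r, -1, by linarith, by linarith, Or.inr rfl, ?_⟩
    have : (m - r) * a - (-1) * b = m * a - ((r - u * b) * a + (u * a - 1) * b) := by ring
    rw [this]
    exact dvd_sub (Dvd.intro _ rfl) (dvd_add (hd1.mul_right _) (hua.mul_right _))

lemma odd_cop2 {x : ℤ} (h : Odd x) : IsCoprime x 2 := by
  obtain ⟨k, hk⟩ := h
  exact ⟨1, -k, by rw [hk]; ring⟩


/-- The set `L(p_1,…,p_n)`: `0 ≤ l_1 ≤ p_1`, `0 ≤ l_j ≤ (p_j − 1)/2` for `j ≥ 2`, and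
`l_j ≠ 0` for at least three indices. -/
def memL (n : ℕ) (hn : 0 < n) (p l : Fin n → ℤ) : Prop :=
  (0 ≤ l ⟨0, hn⟩ ∧ l ⟨0, hn⟩ ≤ p ⟨0, hn⟩) ∧
    (∀ j : Fin n, j ≠ ⟨0, hn⟩ → 0 ≤ l j ∧ 2 * l j ≤ p j - 1) ∧
    3 ≤ Set.ncard {j : Fin n | l j ≠ 0}

theorem statement4 (n : ℕ) (hn : 3 ≤ n) (p : Fin n → ℤ)
    (hp2 : ∀ j, 2 ≤ p j)
    (hpcop : ∀ i j : Fin n, i ≠ j → IsCoprime (p i) (p j))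
    (hpodd : ∀ j : Fin n, j ≠ ⟨0, by omega⟩ → Odd (p j))
    (y : ℤ)
    (hy : Set.ncard {j : Fin n | p j ∣ y} ≤ n - 3) :
    ∃ l : Fin n → ℤ, memL n (by omega) p l ∧
      Int.ModEq (4 * ∏ j, p j) (y ^ 2)
        ((l ⟨0, by omega⟩ * ∏ i ∈ Finset.univ.erase (⟨0, by omega⟩ : Fin n), p i +
            ∑ j ∈ Finset.univ.erase (⟨0, by omega⟩ : Fin n),
              2 * l j * ∏ i ∈ Finset.univ.erase j, p i) ^ 2) := by
  have hnpos : 0 < n := by omega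
  set i0 : Fin n := ⟨0, hnpos⟩ with hi0def
  have hppos : ∀ j, (0:ℤ) < p j := fun j => lt_of_lt_of_le two_pos (hp2 j)
  have H : ∀ j : Fin n, ∃ x ε : ℤ, 0 ≤ x ∧ 2 * x ≤ (if j = i0 then 2 * p i0 else p j) ∧
      (ε = 1 ∨ ε = -1) ∧ (if j = i0 then 2 * p i0 else p j) ∣
        x * (if j = i0 then ∏ i ∈ Finset.univ.erase i0, p i
             else 2 * ∏ i ∈ Finset.univ.erase j, p i) - ε * y := by
    intro j
    by_cases hj : j = i0
    · simp only [if_pos hj]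
      refine key_choice _ _ _ (by linarith [hppos i0]) ?_
      refine IsCoprime.prod_left fun i hi => ?_
      have hii : i ≠ i0 := (Finset.mem_erase.mp hi).1
      exact (odd_cop2 (hpodd i hii)).mul_right (hpcop i i0 hii)
    · simp only [if_neg hj]
      refine key_choice _ _ _ (hppos j) ?_
      exact ((odd_cop2 (hpodd j hj)).symm).mul_left
        (IsCoprime.prod_left fun i hi => hpcop i j (Finset.mem_erase.mp hi).1)
  choose l ε hl0 hl2 hε hdvd using H
  -- the combination z
  set Q := ∏ i ∈ Finset.univ.erase i0, p i with hQ
  set z := l i0 * Q + ∑ j ∈ Finset.univ.erase i0, 2 * l j * ∏ i ∈ Finset.univ.erase j, p i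
    with hzdef
  -- m j ∣ z - ε j * y
  have hzj : ∀ j : Fin n, (if j = i0 then 2 * p i0 else p j) ∣ z - ε j * y := by
    intro j
    by_cases hj : j = i0
    · subst hj
      rw [if_pos rfl]
      have hd := hdvd i0
      rw [if_pos rfl, if_pos rfl] at hd
      have heq : z - ε i0 * y = (l i0 * Q - ε i0 * y) +
          ∑ j ∈ Finset.univ.erase i0, 2 * l j * ∏ i ∈ Finset.univ.erase j, p i := by
        rw [hzdef]; ring
      rw [heq]
      refine dvd_add hd (Finset.dvd_sum fun j' hj' => ?_)
      have hj'i0 : i0 ∈ Finset.univ.erase j' :=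
        Finset.mem_erase.mpr ⟨Ne.symm (Finset.mem_erase.mp hj').1, Finset.mem_univ _⟩
      obtain ⟨t, ht⟩ := Finset.dvd_prod_of_mem p hj'i0
      exact ⟨l j' * t, by rw [ht]; ring⟩
    · rw [if_neg hj]
      have hd := hdvd j
      rw [if_neg hj, if_neg hj] at hd
      have hji0 : j ∈ Finset.univ.erase i0 := Finset.mem_erase.mpr ⟨hj, Finset.mem_univ _⟩
      have hsplit : ∑ j' ∈ Finset.univ.erase i0, 2 * l j' * ∏ i ∈ Finset.univ.erase j', p i =
          (∑ j' ∈ (Finset.univ.erase i0).erase j, 2 * l j' * ∏ i ∈ Finset.univ.erase j', p i) +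
          2 * l j * ∏ i ∈ Finset.univ.erase j, p i :=
        (Finset.sum_erase_add _ _ hji0).symm
      have heq : z - ε j * y = l i0 * Q +
          (∑ j' ∈ (Finset.univ.erase i0).erase j, 2 * l j' * ∏ i ∈ Finset.univ.erase j', p i) +
          (l j * (2 * ∏ i ∈ Finset.univ.erase j, p i) - ε j * y) := by
        rw [hzdef, hsplit]; ring
      rw [heq]
      refine dvd_add (dvd_add ?_ (Finset.dvd_sum fun j' hj' => ?_)) hd
      · exact (Finset.dvd_prod_of_mem p hji0).mul_left _
      · have hjj' : j ∈ Finset.univ.erase j' := by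
          refine Finset.mem_erase.mpr ⟨?_, Finset.mem_univ _⟩
          exact fun h => (Finset.mem_erase.mp hj').1 h.symm
        exact (Finset.dvd_prod_of_mem p hjj').mul_left _
  -- build memL
  refine ⟨l, ⟨⟨hl0 i0, ?_⟩, ?_, ?_⟩, ?_⟩
  · have := hl2 i0
    rw [if_pos rfl] at this
    linarith
  · intro j hj
    refine ⟨hl0 j, ?_⟩
    have h2 := hl2 j
    rw [if_neg hj] at h2
    obtain ⟨k, hk⟩ := hpodd j hj
    omega
  · -- ncard
    have hsub : {j : Fin n | p j ∣ y}ᶜ ⊆ {j : Fin n | l j ≠ 0} := by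
      intro j hj
      simp only [Set.mem_compl_iff, Set.mem_setOf_eq] at hj ⊢
      intro hlj
      apply hj
      have hd := hdvd j
      rw [hlj] at hd
      have hmy : (if j = i0 then 2 * p i0 else p j) ∣ y := by
        rcases hε j with h1 | h1 <;> rw [h1] at hd
        · have : (0:ℤ) * (if j = i0 then ∏ i ∈ Finset.univ.erase i0, p i
              else 2 * ∏ i ∈ Finset.univ.erase j, p i) - 1 * y = -y := by ring
          rw [this] at hd
          exact dvd_neg.mp hd
        · have : (0:ℤ) * (if j = i0 then ∏ i ∈ Finset.univ.erase i0, p i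
              else 2 * ∏ i ∈ Finset.univ.erase j, p i) - (-1) * y = y := by ring
          rw [this] at hd
          exact hd
      by_cases hji : j = i0
      · subst hji
        rw [if_pos rfl] at hmy
        exact dvd_trans (dvd_mul_left (p i0) 2) hmy
      · rwa [if_neg hji] at hmy
    have hcompl := Set.ncard_add_ncard_compl {j : Fin n | p j ∣ y}
    have hcard : Nat.card (Fin n) = n := by simp
    have h3 : 3 ≤ ({j : Fin n | p j ∣ y}ᶜ).ncard := by omega
    exact h3.trans (Set.ncard_le_ncard hsub (Set.toFinite _))
  · -- the congruence
    show Int.ModEq (4 * ∏ j, p j) (y ^ 2) (z ^ 2)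
    rw [Int.modEq_iff_dvd]
    -- goal : 4 * ∏ p ∣ z^2 - y^2
    set g : Fin n → ℤ := fun j => if j = i0 then 4 * p i0 else p j with hg
    have hprodg : ∏ j, g j = 4 * ∏ j, p j := by
      rw [← Finset.mul_prod_erase Finset.univ g (Finset.mem_univ i0),
          ← Finset.mul_prod_erase Finset.univ p (Finset.mem_univ i0)]
      have : ∏ i ∈ Finset.univ.erase i0, g i = ∏ i ∈ Finset.univ.erase i0, p i :=
        Finset.prod_congr rfl fun i hi => if_neg (Finset.mem_erase.mp hi).1
      rw [this]
      simp only [hg, if_pos rfl]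
      ring
    have hpair : (↑(Finset.univ : Finset (Fin n)) : Set (Fin n)).Pairwise (Function.onFun IsCoprime g) := by
      intro i _ j _ hij
      have cop4 : ∀ k : Fin n, k ≠ i0 → IsCoprime (4 * p i0) (p k) := by
        intro k hk
        have h2 : IsCoprime (2:ℤ) (p k) := (odd_cop2 (hpodd k hk)).symm
        have h4 : IsCoprime (4:ℤ) (p k) := by
          have := h2.mul_left h2
          norm_num at this
          exact this
        exact h4.mul_left (hpcop i0 k (Ne.symm hk))
      simp only [Function.onFun, hg]
      by_cases hi : i = i0 <;> by_cases hj : j = i0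
      · exact absurd (hi.trans hj.symm) hij
      · rw [if_pos hi, if_neg hj]; subst hi; exact cop4 j hj
      · rw [if_neg hi, if_pos hj]; subst hj; exact (cop4 i hi).symm
      · rw [if_neg hi, if_neg hj]; exact hpcop i j hij
    have hdiv : ∀ j : Fin n, g j ∣ z ^ 2 - y ^ 2 := by
      intro j
      have hsq : z ^ 2 - y ^ 2 = (z - ε j * y) * (z + ε j * y) := by
        rcases hε j with h | h <;> rw [h] <;> ring
      by_cases hj : j = i0
      · subst hj
        simp only [hg, if_pos rfl]
        have h1 := hzj i0
        rw [if_pos rfl] at h1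
        have h2 : (2:ℤ) ∣ z + ε i0 * y := by
          have h2' : (2:ℤ) ∣ z - ε i0 * y := dvd_trans ⟨p i0, rfl⟩ h1
          obtain ⟨c, hc⟩ := h2'
          exact ⟨c + ε i0 * y, by linarith⟩
        rw [hsq]
        have h4 : (4:ℤ) * p i0 = (2 * p i0) * 2 := by ring
        rw [h4]
        exact mul_dvd_mul h1 h2
      · simp only [hg, if_neg hj]
        have h1 := hzj j
        rw [if_neg hj] at h1
        rw [hsq]
        exact h1.mul_right _
    rw [← hprodg]
    exact Finset.prod_dvd_of_coprime hpair fun j _ => hdiv j
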